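/- Let X be a reflexive real Banach space, Y a Banach space, Z a closed subspace of Y, and T : X → Y bounded linear. Suppose x₀ ∈ S_X, ‖Tx₀‖ = ‖T‖, and y* ∈ Y* with ‖y*‖ = 1 satisfies y*(z) = 0 for all z ∈ Z and y*(Tx₀) = ‖Tx₀‖. Then d(T, L(X,Z)) = sup_{x ∈ S_X} d(Tx, Z) = d(Tx₀, Z) = ‖T‖ and moreover T ⊥_B L(X,Z). -/

import Mathlib

open NormedSpace

theorem stmt_10
    {X Y : Type*} [NormedAddCommGroup X] [NormedSpace ℝ X] [CompleteSpace X]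
    [NormedAddCommGroup Y] [NormedSpace ℝ Y] [CompleteSpace Y]
    (hrefl : Function.Surjective (inclusionInDoubleDual ℝ X))
    (Z : Subspace ℝ Y) (hZ : IsClosed (Z : Set Y))
    (T : X →L[ℝ] Y) (x₀ : X) (hx₀ : ‖x₀‖ = 1) (hTx₀ : ‖T x₀‖ = ‖T‖)
    (g : StrongDual ℝ Y) (hg : ‖g‖ = 1) (hgZ : ∀ z ∈ Z, g z = 0)
    (hgy : g (T x₀) = ‖T x₀‖) :
    sInf {r : ℝ | ∃ S : X →L[ℝ] Y, (∀ x, S x ∈ Z) ∧ r = ‖T - S‖} = ‖T‖ ∧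
    sSup {r : ℝ | ∃ x : X, ‖x‖ = 1 ∧ r = Metric.infDist (T x) (Z : Set Y)} = ‖T‖ ∧
    Metric.infDist (T x₀) (Z : Set Y) = ‖T‖ ∧
    (∀ S : X →L[ℝ] Y, (∀ x, S x ∈ Z) → ∀ lam : ℝ, ‖T + lam • S‖ ≥ ‖T‖) := by
  -- key: for any z ∈ Z, ‖T x₀ - z‖ ≥ ‖T‖
  have key : ∀ z ∈ Z, ‖T‖ ≤ ‖T x₀ - z‖ := by
    intro z hz
    have h1 : g (T x₀ - z) = ‖T‖ := by
      rw [map_sub, hgZ z hz, hgy, hTx₀, sub_zero]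
    calc ‖T‖ = g (T x₀ - z) := h1.symm
      _ ≤ |g (T x₀ - z)| := le_abs_self _
      _ = ‖g (T x₀ - z)‖ := rfl
      _ ≤ ‖g‖ * ‖T x₀ - z‖ := g.le_opNorm _
      _ = ‖T x₀ - z‖ := by rw [hg, one_mul]
  have hZne : (Z : Set Y).Nonempty := ⟨0, Z.zero_mem⟩
  -- infDist at x₀ equals ‖T‖
  have hd : Metric.infDist (T x₀) (Z : Set Y) = ‖T‖ := by
    apply le_antisymm
    · calc Metric.infDist (T x₀) (Z : Set Y) ≤ dist (T x₀) 0 :=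
            Metric.infDist_le_dist_of_mem Z.zero_mem
        _ = ‖T x₀‖ := by rw [dist_zero_right]
        _ = ‖T‖ := hTx₀
    · by_contra h
      push_neg at h
      obtain ⟨z, hz, hlt⟩ := (Metric.infDist_lt_iff hZne).1 h
      rw [dist_eq_norm] at hlt
      exact absurd (key z hz) (not_le.2 hlt)
  -- Birkhoff orthogonality part
  have horth : ∀ S : X →L[ℝ] Y, (∀ x, S x ∈ Z) → ∀ lam : ℝ, ‖T + lam • S‖ ≥ ‖T‖ := by
    intro S hS lam
    have : ‖T‖ ≤ ‖(T + lam • S) x₀‖ := by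
      have := key (-(lam • S x₀)) (Z.neg_mem (Z.smul_mem lam (hS x₀)))
      simpa [sub_neg_eq_add] using this
    calc ‖T‖ ≤ ‖(T + lam • S) x₀‖ := this
      _ ≤ ‖T + lam • S‖ * ‖x₀‖ := (T + lam • S).le_opNorm x₀
      _ = ‖T + lam • S‖ := by rw [hx₀, mul_one]
  refine ⟨?_, ?_, hd, horth⟩
  · -- sInf part
    apply le_antisymm
    · refine csInf_le ⟨‖T‖, ?_⟩ ⟨0, fun x => Z.zero_mem, by simp⟩
      rintro r ⟨S, hS, rfl⟩
      have := horth S hS (-1)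
      simpa [sub_eq_add_neg, neg_one_smul] using this
    · refine le_csInf ⟨‖T‖, ⟨0, fun x => Z.zero_mem, by simp⟩⟩ ?_
      rintro r ⟨S, hS, rfl⟩
      have := horth S hS (-1)
      simpa [sub_eq_add_neg, neg_one_smul] using this
  · -- sSup part
    apply le_antisymm
    · refine csSup_le ⟨‖T‖, ⟨x₀, hx₀, hd.symm⟩⟩ ?_
      rintro r ⟨x, hx, rfl⟩
      calc Metric.infDist (T x) (Z : Set Y) ≤ dist (T x) 0 :=
            Metric.infDist_le_dist_of_mem Z.zero_mem
        _ = ‖T x‖ := by rw [dist_zero_right]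
        _ ≤ ‖T‖ * ‖x‖ := T.le_opNorm x
        _ = ‖T‖ := by rw [hx, mul_one]
    · refine le_csSup ⟨‖T‖, ?_⟩ ⟨x₀, hx₀, hd.symm⟩
      rintro r ⟨x, hx, rfl⟩
      calc Metric.infDist (T x) (Z : Set Y) ≤ dist (T x) 0 :=
              Metric.infDist_le_dist_of_mem Z.zero_mem
          _ = ‖T x‖ := by rw [dist_zero_right]
          _ ≤ ‖T‖ * ‖x‖ := T.le_opNorm x
          _ = ‖T‖ := by rw [hx, mul_one]
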